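/- In any topological space S with a jointly continuous semigroup operation and open shifts, for open sets V, W one has Int(Cl(V)) · Int(Cl(W)) ⊆ Int(Cl(V·W)). -/
import Mathlib


open Pointwise

/-- In a topological space with jointly continuous semigroup operation and open
shifts, for open sets V, W we have Int(Cl(V)) · Int(Cl(W)) ⊆ Int(Cl(V·W)). -/
theorem stmt_8 {S : Type*} [Semigroup S] [TopologicalSpace S]
    (hmul : Continuous fun p : S × S => p.1 * p.2)
    (hshift : ∀ a : S, IsOpenMap (fun x => a * x) ∧ IsOpenMap (fun x => x * a))
    (V W : Set S) (hV : IsOpen V) (hW : IsOpen W) :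
    interior (closure V) * interior (closure W) ⊆ interior (closure (V * W)) := by
  have hleft : ∀ a : S, Continuous (fun x : S => a * x) := fun a =>
    hmul.comp (continuous_const.prodMk continuous_id)
  have hright : ∀ a : S, Continuous (fun x : S => x * a) := fun a =>
    hmul.comp (continuous_id.prodMk continuous_const)
  -- key: Cl V * Cl W ⊆ Cl (V * W)
  have key : ∀ a ∈ closure V, ∀ b ∈ closure W, a * b ∈ closure (V * W) := by
    intro a ha b hb
    have h1 : a * b ∈ closure ((fun x : S => a * x) '' W) := by
      have := image_closure_subset_closure_image (hleft a) (s := W)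
      exact this ⟨b, hb, rfl⟩
    have h2 : (fun x : S => a * x) '' W ⊆ closure (V * W) := by
      rintro _ ⟨w, hw, rfl⟩
      have := image_closure_subset_closure_image (hright w) (s := V) ⟨a, ha, rfl⟩
      refine closure_mono ?_ this
      rintro _ ⟨v, hv, rfl⟩
      exact Set.mul_mem_mul hv hw
    exact closure_minimal h2 isClosed_closure h1
  rintro _ ⟨a, ha, b, hb, rfl⟩
  refine mem_interior.2 ⟨(fun x : S => a * x) '' interior (closure W), ?_, ?_, ?_⟩
  · rintro _ ⟨b', hb', rfl⟩
    exact key a (interior_subset ha) b' (interior_subset hb')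
  · exact (hshift a).1 _ isOpen_interior
  · exact ⟨b, hb, rfl⟩
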